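/- arXiv:0802.0156 — 3 statements merged into one kernel-verified Lean document; each statement's English description precedes it below -/
import Mathlib

section
/- The space 𝔖 of all separable continuous L-structures with a distinguished countable dense subset indexed by ℕ, topologized by the basic open sets U_{φ(ā),ε} = {M ∈ 𝔖 : φ^M(ā) < ε} for quantifier-free L-formulas φ, tuples ā from the distinguished dense subset, and ε > 0, is a Polish space. -/
open scoped Classical

/-! ### A core of continuous first-order logic (countable relational signatures) -/

/-- A countable relational continuous signature: relation symbols indexed by `ℕ`
(with a distinguished metric symbol handled separately in the syntax below),
each with an arity and a prescribed uniform-continuity modulus. -/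
structure CSig where
  arity : ℕ → ℕ
  modulus : ℕ → ℝ → ℝ
  modulus_pos : ∀ i ε, 0 < ε → 0 < modulus i ε

/-- Continuous first-order formulas over `S`, with free variables among `Fin n`.
Connectives: rational constants, pointwise min and max, negation `1 - x`,
truncated plus, truncated minus, `|x - y|`, rescaling by rationals; quantifiers
`inf` and `sup` bind the last variable. -/
inductive CFormula (S : CSig) : ℕ → Type
  | dst : ∀ {n}, Fin n → Fin n → CFormula S n
  | rel : ∀ {n} (i : ℕ), (Fin (S.arity i) → Fin n) → CFormula S n
  | const : ∀ {n}, ℚ → CFormula S n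
  | fmin : ∀ {n}, CFormula S n → CFormula S n → CFormula S n
  | fmax : ∀ {n}, CFormula S n → CFormula S n → CFormula S n
  | neg : ∀ {n}, CFormula S n → CFormula S n
  | addT : ∀ {n}, CFormula S n → CFormula S n → CFormula S n
  | subT : ∀ {n}, CFormula S n → CFormula S n → CFormula S n
  | absd : ∀ {n}, CFormula S n → CFormula S n → CFormula S n
  | scale : ∀ {n}, ℚ → CFormula S n → CFormula S n
  | inf : ∀ {n}, CFormula S (n + 1) → CFormula S n
  | sup : ∀ {n}, CFormula S (n + 1) → CFormula S n

/-- Sentences: formulas with no free variables. -/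
abbrev CSentence (S : CSig) := CFormula S 0

/-- Quantifier-free formulas. -/
inductive IsQF {S : CSig} : ∀ {n}, CFormula S n → Prop
  | dst {n} (a b : Fin n) : IsQF (CFormula.dst a b)
  | rel {n} (i : ℕ) (ts : Fin (S.arity i) → Fin n) : IsQF (CFormula.rel i ts)
  | const {n} (q : ℚ) : IsQF (CFormula.const (n := n) q)
  | fmin {n} {φ ψ : CFormula S n} : IsQF φ → IsQF ψ → IsQF (CFormula.fmin φ ψ)
  | fmax {n} {φ ψ : CFormula S n} : IsQF φ → IsQF ψ → IsQF (CFormula.fmax φ ψ)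
  | neg {n} {φ : CFormula S n} : IsQF φ → IsQF (CFormula.neg φ)
  | addT {n} {φ ψ : CFormula S n} : IsQF φ → IsQF ψ → IsQF (CFormula.addT φ ψ)
  | subT {n} {φ ψ : CFormula S n} : IsQF φ → IsQF ψ → IsQF (CFormula.subT φ ψ)
  | absd {n} {φ ψ : CFormula S n} : IsQF φ → IsQF ψ → IsQF (CFormula.absd φ ψ)
  | scale {n} (q : ℚ) {φ : CFormula S n} : IsQF φ → IsQF (CFormula.scale q φ)

/-- Closure of a class of formulas under (finitely many applications of) `inf`. -/
inductive InfCl {S : CSig} (P : ∀ n, CFormula S n → Prop) : ∀ {n}, CFormula S n → Prop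
  | base {n} {φ : CFormula S n} : P n φ → InfCl P φ
  | step {n} {φ : CFormula S (n + 1)} : InfCl P φ → InfCl P (CFormula.inf φ)

/-- Closure of a class of formulas under (finitely many applications of) `sup`. -/
inductive SupCl {S : CSig} (P : ∀ n, CFormula S n → Prop) : ∀ {n}, CFormula S n → Prop
  | base {n} {φ : CFormula S n} : P n φ → SupCl P φ
  | step {n} {φ : CFormula S (n + 1)} : SupCl P φ → SupCl P (CFormula.sup φ)

/-- The pair (Σₖ, Πₖ) of formula classes: Σ₀ = Π₀ = quantifier-free,
Σ_{k+1} = { inf_x̄ φ : φ ∈ Πₖ }, Π_{k+1} = { sup_x̄ φ : φ ∈ Σₖ }. -/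
def SigmaPi (S : CSig) : ℕ → ((∀ n, CFormula S n → Prop) × (∀ n, CFormula S n → Prop))
  | 0 => (fun _ φ => IsQF φ, fun _ φ => IsQF φ)
  | k + 1 => (fun _ φ => InfCl (SigmaPi S k).2 φ, fun _ φ => SupCl (SigmaPi S k).1 φ)

/-- `φ` is a Σₖ formula. -/
def IsSigmaN (S : CSig) (k : ℕ) {n : ℕ} (φ : CFormula S n) : Prop := (SigmaPi S k).1 n φ

/-- `φ` is a Πₖ formula. -/
def IsPiN (S : CSig) (k : ℕ) {n : ℕ} (φ : CFormula S n) : Prop := (SigmaPi S k).2 n φ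

/-- A continuous `L`-structure: a nonempty complete metric space of diameter `≤ 1`
with `[0,1]`-valued interpretations of all predicate symbols, uniformly continuous
with respect to the prescribed moduli. -/
structure CStructure (S : CSig) where
  Carrier : Type
  metric : MetricSpace Carrier
  nonempty : Nonempty Carrier
  complete : @CompleteSpace Carrier metric.toUniformSpace
  bounded : ∀ x y : Carrier, @dist Carrier metric.toDist x y ≤ 1
  rel : ∀ i, (Fin (S.arity i) → Carrier) → ℝ
  rel_nonneg : ∀ i v, 0 ≤ rel i v
  rel_le_one : ∀ i v, rel i v ≤ 1
  rel_uc : ∀ i (ε : ℝ), 0 < ε → ∀ v w,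
    (∀ j, @dist Carrier metric.toDist (v j) (w j) < S.modulus i ε) → |rel i v - rel i w| ≤ ε

attribute [instance] CStructure.metric CStructure.nonempty CStructure.complete

/-- Clamp a rational constant into `[0,1]`. -/
noncomputable def clampQ (q : ℚ) : ℝ := max 0 (min 1 (q : ℝ))

/-- The value of a formula in a structure under a variable assignment. -/
noncomputable def CStructure.eval {S : CSig} (M : CStructure S) :
    ∀ (n : ℕ), CFormula S n → (Fin n → M.Carrier) → ℝ
  | _, .dst a b, v => dist (v a) (v b)
  | _, .rel i ts, v => M.rel i fun j => v (ts j)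
  | _, .const q, _ => clampQ q
  | n, .fmin φ ψ, v => min (M.eval n φ v) (M.eval n ψ v)
  | n, .fmax φ ψ, v => max (M.eval n φ v) (M.eval n ψ v)
  | n, .neg φ, v => 1 - M.eval n φ v
  | n, .addT φ ψ, v => min 1 (M.eval n φ v + M.eval n ψ v)
  | n, .subT φ ψ, v => max 0 (M.eval n φ v - M.eval n ψ v)
  | n, .absd φ ψ, v => |M.eval n φ v - M.eval n ψ v|
  | n, .scale q φ, v => clampQ q * M.eval n φ v
  | n, .inf φ, v => ⨅ x : M.Carrier, M.eval (n + 1) φ (Fin.snoc v x)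
  | n, .sup φ, v => ⨆ x : M.Carrier, M.eval (n + 1) φ (Fin.snoc v x)

/-- The value of a sentence in a structure. -/
noncomputable def CStructure.sval {S : CSig} (M : CStructure S) (φ : CSentence S) : ℝ :=
  M.eval 0 φ (fun i => i.elim0)

/-- A theory: a set of closed conditions `φ ≤ ε`, coded as pairs `(φ, ε)`. -/
abbrev CTheory (S : CSig) := Set (CSentence S × ℝ)

/-- `M` satisfies the theory `T` (all its closed conditions). -/
def CStructure.SatT {S : CSig} (M : CStructure S) (T : CTheory S) : Prop :=
  ∀ c ∈ T, M.sval c.1 ≤ c.2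

/-- The closed condition `φ ≤ ε` follows from `T`. -/
def Entails {S : CSig} (T : CTheory S) (c : CSentence S × ℝ) : Prop :=
  ∀ M : CStructure S, M.SatT T → M.sval c.1 ≤ c.2

/-- The open condition `φ < ε` follows from `T`. -/
def EntailsOpen {S : CSig} (T : CTheory S) (c : CSentence S × ℝ) : Prop :=
  ∀ M : CStructure S, M.SatT T → M.sval c.1 < c.2

/-- `T` is a theory in the official sense: consistent and closed under entailment. -/
def IsTheory {S : CSig} (T : CTheory S) : Prop :=
  (∃ M : CStructure S, M.SatT T) ∧ ∀ c, Entails T c → c ∈ T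

/-- `T` is universal: axiomatizable by closed conditions `sup_x̄ φ(x̄) = 0` with `φ`
quantifier-free (i.e. by conditions `ψ = 0` for Π₁ sentences `ψ`). -/
def IsUniversalTheory {S : CSig} (T : CTheory S) : Prop :=
  ∃ A : Set (CSentence S), (∀ ψ ∈ A, IsPiN S 1 ψ) ∧
    ∀ M : CStructure S, (M.SatT T ↔ ∀ ψ ∈ A, M.sval ψ = 0)

/-- `T` is inductive: axiomatizable by open conditions `sup_x̄ inf_ȳ φ(x̄,ȳ) < ε` with `φ`
quantifier-free (i.e. by open conditions on Π₂ sentences). -/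
def IsInductiveTheory {S : CSig} (T : CTheory S) : Prop :=
  ∃ A : Set (CSentence S × ℝ), (∀ c ∈ A, IsPiN S 2 c.1 ∧ 0 < c.2) ∧
    ∀ M : CStructure S, (M.SatT T ↔ ∀ c ∈ A, M.sval c.1 < c.2)

/-- An embedding of continuous structures: an isometric map preserving all predicates. -/
structure CEmbedding {S : CSig} (M N : CStructure S) where
  toFun : M.Carrier → N.Carrier
  isometry : ∀ x y, dist (toFun x) (toFun y) = dist x y
  map_rel : ∀ i (v : Fin (S.arity i) → M.Carrier), N.rel i (toFun ∘ v) = M.rel i v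

/-- An embedding is elementary if it preserves the values of all formulas. -/
def CEmbedding.Elementary {S : CSig} {M N : CStructure S} (f : CEmbedding M N) : Prop :=
  ∀ (n : ℕ) (φ : CFormula S n) (v : Fin n → M.Carrier),
    N.eval n φ (f.toFun ∘ v) = M.eval n φ v

/-- `T` is model complete: every embedding between models of `T` is elementary. -/
def IsModelComplete {S : CSig} (T : CTheory S) : Prop :=
  ∀ M N : CStructure S, M.SatT T → N.SatT T → ∀ f : CEmbedding M N, f.Elementary

/-- `M` is an existentially closed model of `T`. -/
def IsEC {S : CSig} (T : CTheory S) (M : CStructure S) : Prop :=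
  M.SatT T ∧ ∀ N : CStructure S, N.SatT T → ∀ f : CEmbedding M N,
    ∀ (n : ℕ) (φ : CFormula S (n + 1)), IsQF φ → ∀ b : Fin n → M.Carrier,
      N.eval n (CFormula.inf φ) (f.toFun ∘ b) = M.eval n (CFormula.inf φ) b

/-- `T'` is the model companion of `T`: the models of `T'` are exactly the
existentially closed models of `T`. -/
def IsModelCompanion {S : CSig} (T T' : CTheory S) : Prop :=
  ∀ M : CStructure S, (M.SatT T' ↔ IsEC T M)

/-- `T'` is ℵ₀-categorical: any two separable models of `T'` are isomorphic. -/
def Aleph0Categorical {S : CSig} (T' : CTheory S) : Prop :=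
  ∀ M N : CStructure S, M.SatT T' → N.SatT T' →
    TopologicalSpace.SeparableSpace M.Carrier → TopologicalSpace.SeparableSpace N.Carrier →
    ∃ f : CEmbedding M N, Function.Surjective f.toFun

/-! ### The Polish space `𝔖` of codes of separable structures -/

/-- A point of `𝔖`: a separable continuous `L`-structure presented on a distinguished
countable dense subset indexed by `ℕ` — i.e. the metric and all predicate values on `ℕ`,
subject to the metric axioms and the uniform-continuity moduli. The actual structure is
the completion; since all predicates and the quantifiers are continuous, all the
first-order data is determined by this code. -/
structure SCode (S : CSig) where
  dd : ℕ → ℕ → ℝ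
  R : ∀ i, (Fin (S.arity i) → ℕ) → ℝ
  dd_nonneg : ∀ i j, 0 ≤ dd i j
  dd_le_one : ∀ i j, dd i j ≤ 1
  dd_self : ∀ i, dd i i = 0
  dd_pos : ∀ i j, i ≠ j → 0 < dd i j
  dd_symm : ∀ i j, dd i j = dd j i
  dd_triangle : ∀ i j k, dd i k ≤ dd i j + dd j k
  R_nonneg : ∀ i v, 0 ≤ R i v
  R_le_one : ∀ i v, R i v ≤ 1
  R_uc : ∀ i (ε : ℝ), 0 < ε → ∀ v w,
    (∀ j, dd (v j) (w j) < S.modulus i ε) → |R i v - R i w| ≤ ε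

/-- Value of a formula on a code, under an assignment of variables to points of the
distinguished dense subset; quantifiers range over the dense subset (equivalently,
by uniform continuity, over the completion). -/
noncomputable def SCode.eval {S : CSig} (x : SCode S) :
    ∀ (n : ℕ), CFormula S n → (Fin n → ℕ) → ℝ
  | _, .dst a b, v => x.dd (v a) (v b)
  | _, .rel i ts, v => x.R i fun j => v (ts j)
  | _, .const q, _ => clampQ q
  | n, .fmin φ ψ, v => min (x.eval n φ v) (x.eval n ψ v)
  | n, .fmax φ ψ, v => max (x.eval n φ v) (x.eval n ψ v)
  | n, .neg φ, v => 1 - x.eval n φ v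
  | n, .addT φ ψ, v => min 1 (x.eval n φ v + x.eval n ψ v)
  | n, .subT φ ψ, v => max 0 (x.eval n φ v - x.eval n ψ v)
  | n, .absd φ ψ, v => |x.eval n φ v - x.eval n ψ v|
  | n, .scale q φ, v => clampQ q * x.eval n φ v
  | n, .inf φ, v => ⨅ k : ℕ, x.eval (n + 1) φ (Fin.snoc v k)
  | n, .sup φ, v => ⨆ k : ℕ, x.eval (n + 1) φ (Fin.snoc v k)

/-- The value of a sentence on a code. -/
noncomputable def SCode.sval {S : CSig} (x : SCode S) (φ : CSentence S) : ℝ :=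
  x.eval 0 φ (fun i => i.elim0)

/-- The structure coded by `x` satisfies the theory `T`. -/
def SCode.SatT {S : CSig} (x : SCode S) (T : CTheory S) : Prop :=
  ∀ c ∈ T, x.sval c.1 ≤ c.2

/-- The basic open set `U_{φ(ā),ε} = {x ∈ 𝔖 : φ^x(ā) < ε}`. -/
def basicSet {S : CSig} (n : ℕ) (φ : CFormula S n) (a : Fin n → ℕ) (ε : ℝ) :
    Set (SCode S) :=
  {x | x.eval n φ a < ε}

/-- The topology on `𝔖` generated by the basic open sets `U_{φ(ā),ε}` for `φ`
quantifier-free, `ā` a tuple from the distinguished dense subset and `ε > 0`. -/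
instance SCode.topologicalSpace (S : CSig) : TopologicalSpace (SCode S) :=
  TopologicalSpace.generateFrom
    {U | ∃ (n : ℕ) (φ : CFormula S n) (a : Fin n → ℕ) (ε : ℝ),
      IsQF φ ∧ 0 < ε ∧ U = basicSet n φ a ε}

/-- `x` codes the structure `M`: the distinguished countable dense subset maps to a dense
sequence in `M` realizing exactly the metric and predicate values recorded in `x`
(i.e. `M` is "the completion" of `x`). For a fixed `M`, `{x ∈ 𝔖 : Codes x M}` is
precisely the isomorphism class of `M` in `𝔖`. -/
def Codes {S : CSig} (x : SCode S) (M : CStructure S) : Prop :=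
  ∃ u : ℕ → M.Carrier, DenseRange u ∧ (∀ i j, dist (u i) (u j) = x.dd i j) ∧
    ∀ i (v : Fin (S.arity i) → ℕ), M.rel i (u ∘ v) = x.R i v


/-! ### Auxiliary material for the proof -/

namespace SCodePolish

open TopologicalSpace Set

variable {S : CSig}

/-- The ambient Polish product space into which `SCode S` embeds. -/
abbrev PSp (S : CSig) : Type :=
  (ℕ → ℕ → ℝ) × (∀ i : ℕ, (Fin (S.arity i) → ℕ) → ℝ) × (ℕ → ℕ → ℝ)

/-- The embedding: metric values, predicate values, and reciprocals of off-diagonal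
metric values (to make the range closed). -/
noncomputable def F (S : CSig) (x : SCode S) : PSp S :=
  (x.dd, x.R, fun i j => if i = j then 0 else (x.dd i j)⁻¹)

lemma contDD (i j : ℕ) : Continuous fun p : PSp S => p.1 i j :=
  (continuous_apply j).comp ((continuous_apply i).comp continuous_fst)

lemma contR (i : ℕ) (v : Fin (S.arity i) → ℕ) :
    Continuous fun p : PSp S => p.2.1 i v :=
  (continuous_apply v).comp ((continuous_apply i).comp (continuous_fst.comp continuous_snd))

lemma contQ (i j : ℕ) : Continuous fun p : PSp S => p.2.2 i j :=
  (continuous_apply j).comp ((continuous_apply i).comp (continuous_snd.comp continuous_snd))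

/-- Quantifier-free evaluations factor continuously through the embedding. -/
lemma qf_factor {n : ℕ} {φ : CFormula S n} (h : IsQF φ) :
    ∀ v : Fin n → ℕ, ∃ g : PSp S → ℝ, Continuous g ∧
      ∀ x : SCode S, x.eval n φ v = g (F S x) := by
  induction h with
  | dst a b =>
    exact fun v => ⟨fun p => p.1 (v a) (v b), contDD _ _, fun x => by simp [SCode.eval, F]⟩
  | rel i ts =>
    exact fun v => ⟨fun p => p.2.1 i fun j => v (ts j), contR _ _,
      fun x => by simp [SCode.eval, F]⟩
  | const q =>
    exact fun v => ⟨fun _ => clampQ q, continuous_const, fun x => by simp [SCode.eval]⟩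
  | fmin h1 h2 ih1 ih2 =>
    intro v
    obtain ⟨g1, hg1, he1⟩ := ih1 v; obtain ⟨g2, hg2, he2⟩ := ih2 v
    exact ⟨fun p => min (g1 p) (g2 p), hg1.min hg2,
      fun x => by simp [SCode.eval, he1 x, he2 x]⟩
  | fmax h1 h2 ih1 ih2 =>
    intro v
    obtain ⟨g1, hg1, he1⟩ := ih1 v; obtain ⟨g2, hg2, he2⟩ := ih2 v
    exact ⟨fun p => max (g1 p) (g2 p), hg1.max hg2,
      fun x => by simp [SCode.eval, he1 x, he2 x]⟩
  | neg h1 ih1 =>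
    intro v
    obtain ⟨g1, hg1, he1⟩ := ih1 v
    exact ⟨fun p => 1 - g1 p, continuous_const.sub hg1,
      fun x => by simp [SCode.eval, he1 x]⟩
  | addT h1 h2 ih1 ih2 =>
    intro v
    obtain ⟨g1, hg1, he1⟩ := ih1 v; obtain ⟨g2, hg2, he2⟩ := ih2 v
    exact ⟨fun p => min 1 (g1 p + g2 p), continuous_const.min (hg1.add hg2),
      fun x => by simp [SCode.eval, he1 x, he2 x]⟩
  | subT h1 h2 ih1 ih2 =>
    intro v
    obtain ⟨g1, hg1, he1⟩ := ih1 v; obtain ⟨g2, hg2, he2⟩ := ih2 v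
    exact ⟨fun p => max 0 (g1 p - g2 p), continuous_const.max (hg1.sub hg2),
      fun x => by simp [SCode.eval, he1 x, he2 x]⟩
  | absd h1 h2 ih1 ih2 =>
    intro v
    obtain ⟨g1, hg1, he1⟩ := ih1 v; obtain ⟨g2, hg2, he2⟩ := ih2 v
    exact ⟨fun p => |g1 p - g2 p|, (hg1.sub hg2).abs,
      fun x => by simp [SCode.eval, he1 x, he2 x]⟩
  | scale q h1 ih1 =>
    intro v
    obtain ⟨g1, hg1, he1⟩ := ih1 v
    exact ⟨fun p => clampQ q * g1 p, continuous_const.mul hg1,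
      fun x => by simp [SCode.eval, he1 x]⟩

/-- A real-valued map is continuous as soon as the strict sublevel and superlevel
sets are open. -/
lemma continuous_to_real {X : Type*} [tX : TopologicalSpace X] {f : X → ℝ}
    (h1 : ∀ a : ℝ, IsOpen {x | f x < a}) (h2 : ∀ a : ℝ, IsOpen {x | a < f x}) :
    Continuous f := by
  have H : @Continuous X ℝ tX (generateFrom {s | ∃ a : ℝ, s = Set.Ioi a ∨ s = Set.Iio a}) f := by
    rw [continuous_generateFrom_iff]
    rintro s ⟨a, rfl | rfl⟩
    · exact h2 a
    · exact h1 a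
  rwa [← Preorder.topology, ← OrderTopology.topology_eq_generate_intervals (α := ℝ)] at H

lemma basic_isOpen {n : ℕ} {φ : CFormula S n} (hφ : IsQF φ) (a : Fin n → ℕ) {ε : ℝ}
    (hε : 0 < ε) : IsOpen (basicSet n φ a ε) :=
  TopologicalSpace.isOpen_generateFrom_of_mem ⟨n, φ, a, ε, hφ, hε, rfl⟩

/-- Continuity of the metric coordinates on `SCode S`. -/
lemma cont_dd (i j : ℕ) : Continuous fun x : SCode S => x.dd i j := by
  apply continuous_to_real
  · intro a
    by_cases ha : 0 < a
    · have : {x : SCode S | x.dd i j < a} = basicSet 2 (CFormula.dst 0 1) ![i, j] a := by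
        ext x; simp [basicSet, SCode.eval]
      rw [this]; exact basic_isOpen (IsQF.dst 0 1) _ ha
    · have : {x : SCode S | x.dd i j < a} = ∅ := by
        ext x
        simp only [Set.mem_setOf_eq, Set.mem_empty_iff_false, iff_false, not_lt]
        exact le_trans (not_lt.1 ha) (x.dd_nonneg i j)
      rw [this]; exact isOpen_empty
  · intro a
    by_cases ha0 : a < 0
    · have : {x : SCode S | a < x.dd i j} = Set.univ := by
        ext x
        simp only [Set.mem_setOf_eq, Set.mem_univ, iff_true]
        exact lt_of_lt_of_le ha0 (x.dd_nonneg i j)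
      rw [this]; exact isOpen_univ
    · by_cases ha1 : a < 1
      · have : {x : SCode S | a < x.dd i j}
            = basicSet 2 (CFormula.neg (CFormula.dst 0 1)) ![i, j] (1 - a) := by
          ext x
          simp only [basicSet, Set.mem_setOf_eq, SCode.eval, Matrix.cons_val_zero,
            Matrix.cons_val_one, Matrix.head_cons]
          constructor <;> intro h <;> linarith
        rw [this]
        exact basic_isOpen (IsQF.neg (IsQF.dst 0 1)) _ (by linarith)
      · have : {x : SCode S | a < x.dd i j} = ∅ := by
          ext x
          simp only [Set.mem_setOf_eq, Set.mem_empty_iff_false, iff_false, not_lt]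
          exact le_trans (x.dd_le_one i j) (not_lt.1 ha1)
        rw [this]; exact isOpen_empty

/-- Continuity of the predicate coordinates on `SCode S`. -/
lemma cont_R (i : ℕ) (v : Fin (S.arity i) → ℕ) :
    Continuous fun x : SCode S => x.R i v := by
  apply continuous_to_real
  · intro a
    by_cases ha : 0 < a
    · have : {x : SCode S | x.R i v < a}
          = basicSet (S.arity i) (CFormula.rel i (fun j => j)) v a := by
        ext x; simp [basicSet, SCode.eval]
      rw [this]; exact basic_isOpen (IsQF.rel i _) _ ha
    · have : {x : SCode S | x.R i v < a} = ∅ := by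
        ext x
        simp only [Set.mem_setOf_eq, Set.mem_empty_iff_false, iff_false, not_lt]
        exact le_trans (not_lt.1 ha) (x.R_nonneg i v)
      rw [this]; exact isOpen_empty
  · intro a
    by_cases ha0 : a < 0
    · have : {x : SCode S | a < x.R i v} = Set.univ := by
        ext x
        simp only [Set.mem_setOf_eq, Set.mem_univ, iff_true]
        exact lt_of_lt_of_le ha0 (x.R_nonneg i v)
      rw [this]; exact isOpen_univ
    · by_cases ha1 : a < 1
      · have : {x : SCode S | a < x.R i v}
            = basicSet (S.arity i) (CFormula.neg (CFormula.rel i (fun j => j))) v (1 - a) := by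
          ext x
          simp only [basicSet, Set.mem_setOf_eq, SCode.eval, Matrix.cons_val_zero,
            Matrix.cons_val_one, Matrix.head_cons]
          constructor <;> intro h <;> linarith
        rw [this]
        exact basic_isOpen (IsQF.neg (IsQF.rel i _)) _ (by linarith)
      · have : {x : SCode S | a < x.R i v} = ∅ := by
          ext x
          simp only [Set.mem_setOf_eq, Set.mem_empty_iff_false, iff_false, not_lt]
          exact le_trans (x.R_le_one i v) (not_lt.1 ha1)
        rw [this]; exact isOpen_empty

lemma cont_F (S : CSig) : Continuous (F S) := by
  refine continuous_prodMk.2 ⟨?_, continuous_prodMk.2 ⟨?_, ?_⟩⟩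
  · exact continuous_pi fun i => continuous_pi fun j => cont_dd i j
  · exact continuous_pi fun i => continuous_pi fun v => cont_R i v
  · refine continuous_pi fun i => continuous_pi fun j => ?_
    by_cases h : i = j
    · simp only [if_pos h]; exact continuous_const
    · simp only [if_neg h]
      exact (cont_dd i j).inv₀ fun x => (x.dd_pos i j h).ne'

lemma inj_F (S : CSig) : Function.Injective (F S) := by
  intro x y h
  cases x; cases y
  simp only [F, Prod.mk.injEq] at h
  obtain ⟨h1, h2, -⟩ := h
  simp_all

/-- The topology of `SCode S` is induced by the embedding. -/
lemma topology_eq (S : CSig) :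
    SCode.topologicalSpace S = TopologicalSpace.induced (F S) inferInstance := by
  refine le_antisymm (continuous_iff_le_induced.mp (cont_F S)) (le_generateFrom ?_)
  rintro U ⟨n, φ, a, ε, hqf, hε, rfl⟩
  obtain ⟨g, hg, hgx⟩ := qf_factor hqf a
  exact isOpen_induced_iff.mpr ⟨g ⁻¹' Set.Iio ε, hg.isOpen_preimage _ isOpen_Iio,
    by ext x; simp [basicSet, hgx x]⟩

lemma isClosed_impLt {i : ℕ} (ε m : ℝ) (v w : Fin (S.arity i) → ℕ) :
    IsClosed {p : PSp S | (∀ j, p.1 (v j) (w j) < m) → |p.2.1 i v - p.2.1 i w| ≤ ε} := by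
  have heq : {p : PSp S | (∀ j, p.1 (v j) (w j) < m) → |p.2.1 i v - p.2.1 i w| ≤ ε}
      = (⋃ j, {p : PSp S | m ≤ p.1 (v j) (w j)})
        ∪ {p : PSp S | |p.2.1 i v - p.2.1 i w| ≤ ε} := by
    ext p
    simp only [Set.mem_setOf_eq, Set.mem_union, Set.mem_iUnion]
    constructor
    · intro h
      by_cases hc : ∀ j, p.1 (v j) (w j) < m
      · exact Or.inr (h hc)
      · push_neg at hc; exact Or.inl hc
    · rintro (⟨j, hj⟩ | h) hall
      · exact absurd (hall j) (not_lt.mpr hj)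
      · exact h
  rw [heq]
  refine IsClosed.union (isClosed_iUnion_of_finite fun j => ?_) ?_
  · exact isClosed_le continuous_const (contDD _ _)
  · exact isClosed_le ((contR i v).sub (contR i w)).abs continuous_const

lemma isClosed_imp_const {X : Type*} [TopologicalSpace X] {c : Prop} {q : X → Prop}
    (h : IsClosed {x | q x}) : IsClosed {x | c → q x} := by
  by_cases hc : c
  · simpa [hc] using h
  · simp [hc]

lemma isClosed_setOf_forall {X ι : Type*} [TopologicalSpace X] {p : ι → X → Prop}
    (h : ∀ i, IsClosed {x | p i x}) : IsClosed {x | ∀ i, p i x} := by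
  have : {x | ∀ i, p i x} = ⋂ i, {x | p i x} := by ext x; simp
  rw [this]; exact isClosed_iInter h

/-- The conditions defining the (closed) range of the embedding. -/
def Cset (S : CSig) : Set (PSp S) :=
  {p | (∀ i j, 0 ≤ p.1 i j) ∧ (∀ i j, p.1 i j ≤ 1) ∧ (∀ i, p.1 i i = 0)
    ∧ (∀ i j, p.1 i j = p.1 j i) ∧ (∀ i j k, p.1 i k ≤ p.1 i j + p.1 j k)
    ∧ (∀ i v, 0 ≤ p.2.1 i v) ∧ (∀ i v, p.2.1 i v ≤ 1)
    ∧ (∀ i (ε : ℝ), 0 < ε → ∀ v w, (∀ j, p.1 (v j) (w j) < S.modulus i ε)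
        → |p.2.1 i v - p.2.1 i w| ≤ ε)
    ∧ (∀ i, p.2.2 i i = 0) ∧ (∀ i j, i ≠ j → p.2.2 i j * p.1 i j = 1)}

lemma isClosed_Cset (S : CSig) : IsClosed (Cset S) := by
  refine IsClosed.inter ?_ (IsClosed.inter ?_ (IsClosed.inter ?_ (IsClosed.inter ?_
    (IsClosed.inter ?_ (IsClosed.inter ?_ (IsClosed.inter ?_ (IsClosed.inter ?_
    (IsClosed.inter ?_ ?_))))))))
  · exact isClosed_setOf_forall fun i => isClosed_setOf_forall fun j =>
      isClosed_le continuous_const (contDD i j)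
  · exact isClosed_setOf_forall fun i => isClosed_setOf_forall fun j =>
      isClosed_le (contDD i j) continuous_const
  · exact isClosed_setOf_forall fun i => isClosed_eq (contDD i i) continuous_const
  · exact isClosed_setOf_forall fun i => isClosed_setOf_forall fun j =>
      isClosed_eq (contDD i j) (contDD j i)
  · exact isClosed_setOf_forall fun i => isClosed_setOf_forall fun j =>
      isClosed_setOf_forall fun k =>
        isClosed_le (contDD i k) ((contDD i j).add (contDD j k))
  · exact isClosed_setOf_forall fun i => isClosed_setOf_forall fun v =>
      isClosed_le continuous_const (contR i v)
  · exact isClosed_setOf_forall fun i => isClosed_setOf_forall fun v =>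
      isClosed_le (contR i v) continuous_const
  · exact isClosed_setOf_forall fun i => isClosed_setOf_forall fun ε =>
      isClosed_imp_const (isClosed_setOf_forall fun v => isClosed_setOf_forall fun w =>
        isClosed_impLt ε (S.modulus i ε) v w)
  · exact isClosed_setOf_forall fun i => isClosed_eq (contQ i i) continuous_const
  · exact isClosed_setOf_forall fun i => isClosed_setOf_forall fun j =>
      isClosed_imp_const (isClosed_eq ((contQ i j).mul (contDD i j)) continuous_const)

lemma range_F (S : CSig) : Set.range (F S) = Cset S := by
  apply Set.Subset.antisymm
  · rintro _ ⟨x, rfl⟩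
    refine ⟨x.dd_nonneg, x.dd_le_one, x.dd_self, x.dd_symm, x.dd_triangle, x.R_nonneg,
      x.R_le_one, x.R_uc, fun i => if_pos rfl, fun i j h => ?_⟩
    show (if i = j then (0:ℝ) else (x.dd i j)⁻¹) * x.dd i j = 1
    rw [if_neg h]
    exact inv_mul_cancel₀ (x.dd_pos i j h).ne'
  · rintro ⟨d, r, q⟩ ⟨h1, h2, h3, h4, h5, h6, h7, h8, h9, h10⟩
    have hdpos : ∀ i j, i ≠ j → 0 < d i j := by
      intro i j hij
      rcases (h1 i j).lt_or_eq with h | h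
      · exact h
      · exfalso; have := h10 i j hij; rw [← h, mul_zero] at this; exact absurd this (by norm_num)
    refine ⟨⟨d, r, h1, h2, h3, hdpos, h4, h5, h6, h7, h8⟩, ?_⟩
    refine Prod.ext rfl (Prod.ext rfl ?_)
    funext i j
    show (if i = j then (0:ℝ) else (d i j)⁻¹) = q i j
    by_cases hij : i = j
    · rw [if_pos hij]; subst hij; exact (h9 i).symm
    · rw [if_neg hij]
      exact (eq_inv_of_mul_eq_one_left (h10 i j hij)).symm

end SCodePolish

/-- The space `𝔖` of all separable continuous `L`-structures with a
distinguished countable dense subset indexed by `ℕ`, topologized by the basic open sets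
`U_{φ(ā),ε}` for quantifier-free `φ`, tuples `ā` from the dense subset and `ε > 0`,
is a Polish space. -/
theorem polishSpace_SCode (S : CSig) : PolishSpace (SCode S) := by
  classical
  haveI hPol : PolishSpace (Set.range (SCodePolish.F S)) := by
    rw [SCodePolish.range_F S]
    exact (SCodePolish.isClosed_Cset S).polishSpace
  let e : SCode S ≃ Set.range (SCodePolish.F S) :=
    Equiv.ofInjective _ (SCodePolish.inj_F S)
  have key : SCode.topologicalSpace S
      = TopologicalSpace.induced (⇑e) inferInstance := by
    rw [SCodePolish.topology_eq S]
    rw [show (inferInstance : TopologicalSpace (Set.range (SCodePolish.F S)))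
      = TopologicalSpace.induced (Subtype.val) inferInstance from rfl, induced_compose]
    congr 1
  rw [key]
  exact e.polishSpace_induced
end

section
/- For every (n+1)×(n+1) distance matrix (r_{ij}) of a finite metric space of diameter ≤ 1 and every ε > 0 there exists δ > 0 such that: whenever a₁, …, aₙ are points of 𝕌 with |d(aᵢ,aⱼ) − r_{ij}| < δ for all 1 ≤ i,j ≤ n, there exists a point a_{n+1} ∈ 𝕌 with |d(aᵢ,a_{n+1}) − r_{i,n+1}| ≤ ε for all 1 ≤ i ≤ n. -/
open TopologicalSpace

/-- The set `Met₁` of all metrics on `ℕ` with values in `[0,1]`, inside the product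
space `[0,1]^{ℕ×ℕ}`. -/
def Met1 : Set ((ℕ × ℕ) → Set.Icc (0 : ℝ) 1) :=
  {f | (∀ i, (f (i, i) : ℝ) = 0) ∧ (∀ i j, (f (i, j) : ℝ) = f (j, i)) ∧
    (∀ i j k, (f (i, k) : ℝ) ≤ f (i, j) + f (j, k)) ∧
    ∀ i j, i ≠ j → (0 : ℝ) < f (i, j)}

/-- The approximate one-point extension property for a metric space of diameter `≤ 1`:
every metrically consistent prescription of distances to a finite tuple is realized
up to any `ε > 0`. -/
def ApproxExtProp (M : Type) [MetricSpace M] : Prop :=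
  ∀ (n : ℕ) (a : Fin n → M) (r : Fin n → ℝ),
    (∀ i, 0 ≤ r i ∧ r i ≤ 1) →
    (∀ i j, |r i - r j| ≤ dist (a i) (a j) ∧ dist (a i) (a j) ≤ r i + r j) →
    ∀ ε : ℝ, 0 < ε → ∃ y : M, ∀ i, |dist y (a i) - r i| ≤ ε

/-- The exact one-point extension property for a metric space of diameter `≤ 1`:
every metrically consistent prescription of distances to a finite tuple is realized
exactly. -/
def ExactExtProp (M : Type) [MetricSpace M] : Prop :=
  ∀ (n : ℕ) (a : Fin n → M) (r : Fin n → ℝ),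
    (∀ i, 0 ≤ r i ∧ r i ≤ 1) →
    (∀ i j, |r i - r j| ≤ dist (a i) (a j) ∧ dist (a i) (a j) ≤ r i + r j) →
    ∃ y : M, ∀ i, dist y (a i) = r i

/-- `U` is (a copy of) the Urysohn space of diameter 1: a complete separable metric
space with all distances `≤ 1` satisfying the exact one-point extension property. -/
def IsUrysohn (U : Type) [MetricSpace U] : Prop :=
  CompleteSpace U ∧ SeparableSpace U ∧ (∀ x y : U, dist x y ≤ 1) ∧ ExactExtProp U

/-- For every `(n+1) × (n+1)` distance matrix `r` of a finite metric
space of diameter `≤ 1` and every `ε > 0` there is `δ > 0` such that: whenever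
`a₁, …, aₙ ∈ 𝕌` satisfy `|d(aᵢ,aⱼ) − r_{ij}| < δ` for all `i, j ≤ n`, there is a point
`b ∈ 𝕌` with `|d(aᵢ,b) − r_{i,n+1}| ≤ ε` for all `i ≤ n`. -/
theorem urysohn_approx_extension (U : Type) [MetricSpace U] (hU : IsUrysohn U)
    (n : ℕ) (r : Fin (n + 1) → Fin (n + 1) → ℝ)
    (hself : ∀ i, r i i = 0) (hsymm : ∀ i j, r i j = r j i)
    (htri : ∀ i j k, r i k ≤ r i j + r j k)
    (hpos : ∀ i j, i ≠ j → 0 < r i j) (hle : ∀ i j, r i j ≤ 1)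
    (ε : ℝ) (hε : 0 < ε) :
    ∃ δ : ℝ, 0 < δ ∧ ∀ a : Fin n → U,
      (∀ i j : Fin n, |dist (a i) (a j) - r i.castSucc j.castSucc| < δ) →
      ∃ b : U, ∀ i : Fin n, |dist (a i) b - r i.castSucc (Fin.last n)| ≤ ε := by
  obtain ⟨-, -, hdiam, hext⟩ := hU
  rcases Nat.eq_zero_or_pos n with rfl | hn
  · refine ⟨1, one_pos, fun a _ => ?_⟩
    obtain ⟨y, -⟩ := hext 0 Fin.elim0 Fin.elim0 (fun i => i.elim0) (fun i => i.elim0)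
    exact ⟨y, fun i => i.elim0⟩
  haveI : Nonempty (Fin n) := Fin.pos_iff_nonempty.mp hn
  have hne : (Finset.univ : Finset (Fin n)).Nonempty := Finset.univ_nonempty
  refine ⟨ε, hε, fun a ha => ?_⟩
  set ρ : Fin n → ℝ := fun j => r j.castSucc (Fin.last n) with hρ
  have hρpos : ∀ j, 0 < ρ j := fun j => hpos _ _ (Fin.castSucc_lt_last j).ne
  have hρle : ∀ j, ρ j ≤ 1 := fun j => hle _ _
  set g : Fin n → ℝ := fun i => Finset.univ.inf' hne (fun j => ρ j + dist (a i) (a j)) with hg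
  set f : Fin n → ℝ := fun i => min 1 (ε + g i) with hf
  have hgpos : ∀ i, 0 < g i := by
    intro i
    apply (Finset.lt_inf'_iff hne).mpr
    intro j _
    have := dist_nonneg (x := a i) (y := a j)
    have := hρpos j
    linarith
  have hgle : ∀ i, g i ≤ ρ i := by
    intro i
    have := Finset.inf'_le (fun j => ρ j + dist (a i) (a j)) (Finset.mem_univ i)
    simp only [dist_self, add_zero] at this
    exact this
  have hglb : ∀ i, ρ i ≤ ε + g i := by
    intro i
    obtain ⟨p, -, hp⟩ := Finset.exists_mem_eq_inf' hne (fun j => ρ j + dist (a i) (a j))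
    have h1 := (abs_lt.mp (ha i p)).1
    have h2 := htri i.castSucc p.castSucc (Fin.last n)
    rw [hg]
    simp only [hp]
    simp only [hρ] at *
    linarith
  have hgLip : ∀ i j, g i ≤ g j + dist (a i) (a j) := by
    intro i j
    obtain ⟨q, -, hq⟩ := Finset.exists_mem_eq_inf' hne (fun k => ρ k + dist (a j) (a k))
    have h1 := Finset.inf'_le (fun k => ρ k + dist (a i) (a k)) (Finset.mem_univ q)
    have h2 := dist_triangle (a i) (a j) (a q)
    rw [hg]
    simp only [hq]
    try simp only at h1 ⊢
    linarith
  have key : ∀ i j, f i ≤ f j + dist (a i) (a j) := by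
    intro i j
    rcases min_cases 1 (ε + g j) with ⟨h1, h2⟩ | ⟨h1, h2⟩
    · have h3 := min_le_left 1 (ε + g i)
      have h4 := dist_nonneg (x := a i) (y := a j)
      rw [hf]; simp only [h1]; linarith
    · have h3 := min_le_right 1 (ε + g i)
      have h4 := hgLip i j
      rw [hf]; simp only [h1]; linarith
  have hf0 : ∀ i, 0 ≤ f i ∧ f i ≤ 1 := by
    intro i
    refine ⟨le_min zero_le_one (by have := hgpos i; linarith), min_le_left _ _⟩
  have hfcond : ∀ i j, |f i - f j| ≤ dist (a i) (a j) ∧ dist (a i) (a j) ≤ f i + f j := by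
    intro i j
    constructor
    · rw [abs_sub_le_iff]
      refine ⟨by linarith [key i j], ?_⟩
      have := key j i
      rw [dist_comm (a j) (a i)] at this
      linarith
    · rcases le_or_gt 1 (ε + g i) with h1 | h1
      · have : f i = 1 := by rw [hf]; exact min_eq_left h1
        have := (hf0 j).1
        have := hdiam (a i) (a j)
        linarith
      rcases le_or_gt 1 (ε + g j) with h2 | h2
      · have : f j = 1 := by rw [hf]; exact min_eq_left h2
        have := (hf0 i).1
        have := hdiam (a i) (a j)
        linarith
      have hfi : f i = ε + g i := by rw [hf]; exact min_eq_right h1.le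
      have hfj : f j = ε + g j := by rw [hf]; exact min_eq_right h2.le
      obtain ⟨p, -, hp⟩ := Finset.exists_mem_eq_inf' hne (fun k => ρ k + dist (a i) (a k))
      obtain ⟨q, -, hq⟩ := Finset.exists_mem_eq_inf' hne (fun k => ρ k + dist (a j) (a k))
      have h3 := (abs_lt.mp (ha p q)).2
      have h4 := htri p.castSucc (Fin.last n) q.castSucc
      have h5 : r (Fin.last n) q.castSucc = ρ q := hsymm _ _
      have h6 := dist_triangle (a i) (a p) (a j)
      have h7 := dist_triangle (a p) (a q) (a j)
      have hgi : g i = ρ p + dist (a i) (a p) := by rw [hg]; simpa using hp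
      have hgj : g j = ρ q + dist (a j) (a q) := by rw [hg]; simpa using hq
      have h8 : dist (a p) (a j) ≤ dist (a p) (a q) + dist (a j) (a q) := by
        rw [dist_comm (a q) (a j)] at h7; exact h7
      rw [hfi, hfj, hgi, hgj]
      simp only [hρ] at *
      linarith
  obtain ⟨y, hy⟩ := hext n a f hf0 hfcond
  refine ⟨y, fun i => ?_⟩
  have h1 : f i ≤ ε + ρ i := le_trans (min_le_right _ _) (by have := hgle i; linarith)
  have h2 : ρ i ≤ f i := le_min (hρle i) (hglb i)
  rw [dist_comm, hy i, abs_le]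
  constructor <;> [linarith [h2]; linarith [h1]]
end

section
/- Any two complete separable metric spaces of diameter ≤ 1, each satisfying the approximate one-point extension property, are isometric. (Hence the Urysohn space of diameter 1 is the unique complete separable metric space of diameter ≤ 1 with this property.) -/
open TopologicalSpace

open Filter

lemma exact_of_approx {M : Type} [MetricSpace M] [CompleteSpace M]
    (hM : ApproxExtProp M) : ExactExtProp M := by
  intro n a r hr hcons
  have key : ∀ (k : ℕ) (z : M), (∀ i, |dist z (a i) - r i| ≤ (1/2 : ℝ) ^ k) →
      ∃ z', (∀ i, |dist z' (a i) - r i| ≤ (1/2 : ℝ) ^ (k+1)) ∧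
        dist z' z ≤ (1/2 : ℝ) ^ k + (1/2 : ℝ) ^ (k+1) := by
    intro k z hz
    set s : ℝ := ((Finset.univ.sup fun i : Fin n => Real.toNNReal |dist z (a i) - r i| : NNReal) : ℝ)
      with hs
    have hs0 : 0 ≤ s := NNReal.coe_nonneg _
    have hsle : ∀ i, |dist z (a i) - r i| ≤ s := by
      intro i
      have h1 := Finset.le_sup (f := fun i : Fin n => Real.toNNReal |dist z (a i) - r i|)
        (Finset.mem_univ i)
      calc |dist z (a i) - r i|
          = ((Real.toNNReal |dist z (a i) - r i| : NNReal) : ℝ) :=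
            (Real.coe_toNNReal _ (abs_nonneg _)).symm
        _ ≤ s := by exact_mod_cast h1
    have hsup_le : ∀ x : ℝ, 0 ≤ x → (∀ i, |dist z (a i) - r i| ≤ x) → s ≤ x := by
      intro x hx h
      rw [hs, ← Real.coe_toNNReal x hx]
      exact_mod_cast Finset.sup_le fun i _ => Real.toNNReal_mono (h i)
    have hsk : s ≤ (1/2 : ℝ) ^ k := hsup_le _ (by positivity) hz
    have hs1 : s ≤ 1 := hsk.trans (pow_le_one₀ (by norm_num) (by norm_num))
    obtain ⟨y, hy⟩ := hM (n+1) (Fin.snoc a z) (Fin.snoc r s)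
      (by
        intro i
        refine Fin.lastCases ?_ ?_ i
        · simp [Fin.snoc_last]; exact ⟨hs0, hs1⟩
        · intro j; simp [Fin.snoc_castSucc]; exact hr j)
      (by
        intro i j
        refine Fin.lastCases ?_ ?_ i
        · refine Fin.lastCases ?_ ?_ j
          · simp [Fin.snoc_last]
            linarith [hs0]
          · intro j'
            simp only [Fin.snoc_last, Fin.snoc_castSucc]
            constructor
            · rw [abs_sub_le_iff]
              constructor
              · -- s - r j' ≤ dist z (a j')
                have := hsup_le (r j' + dist (a j') z) (add_nonneg (hr j').1 dist_nonneg) (by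
                  intro i'
                  rw [abs_sub_le_iff]
                  constructor
                  · have t1 : dist z (a i') ≤ dist z (a j') + dist (a j') (a i') :=
                      dist_triangle _ _ _
                    have t2 : dist (a j') (a i') ≤ r j' + r i' := (hcons j' i').2
                    have : dist (a j') z = dist z (a j') := dist_comm _ _
                    linarith
                  · have t1 : r i' - r j' ≤ |r i' - r j'| := le_abs_self _
                    have t2 : |r i' - r j'| ≤ dist (a i') (a j') := (hcons i' j').1
                    have t3 : dist (a i') (a j') ≤ dist (a i') z + dist z (a j') :=
                      dist_triangle _ _ _
                    have h4 : dist (a j') z = dist z (a j') := dist_comm _ _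
                    have h5 : dist (a i') z = dist z (a i') := dist_comm _ _
                    linarith [dist_comm (a j') z, dist_comm (a i') z]
                  )
                have hd : dist (a j') z = dist z (a j') := dist_comm _ _
                linarith
              · have := hsle j'
                have h1 : r j' - dist z (a j') ≤ |dist z (a j') - r j'| := by
                  rw [abs_sub_comm]; exact le_abs_self _
                have hd : dist (a j') z = dist z (a j') := dist_comm _ _
                linarith
            · have := hsle j'
              have h1 : dist z (a j') - r j' ≤ |dist z (a j') - r j'| := le_abs_self _
              have hd : dist (a j') z = dist z (a j') := dist_comm _ _
              linarith
        · intro i'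
          refine Fin.lastCases ?_ ?_ j
          · simp only [Fin.snoc_last, Fin.snoc_castSucc]
            constructor
            · rw [abs_sub_le_iff]
              have h0 := hsle i'
              have h1 : dist z (a i') - r i' ≤ |dist z (a i') - r i'| := le_abs_self _
              have h2 : r i' - dist z (a i') ≤ |dist z (a i') - r i'| := by
                rw [abs_sub_comm]; exact le_abs_self _
              have hd : dist (a i') z = dist z (a i') := dist_comm _ _
              constructor
              · -- r i' - s ≤ dist (a i') z
                linarith
              · -- s - r i' ≤ dist (a i') z
                have := hsup_le (r i' + dist (a i') z) (add_nonneg (hr i').1 dist_nonneg) (by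
                  intro j'
                  rw [abs_sub_le_iff]
                  constructor
                  · have t1 : dist z (a j') ≤ dist z (a i') + dist (a i') (a j') :=
                      dist_triangle _ _ _
                    have t2 : dist (a i') (a j') ≤ r i' + r j' := (hcons i' j').2
                    linarith
                  · have t1 : r j' - r i' ≤ |r j' - r i'| := le_abs_self _
                    have t2 : |r j' - r i'| ≤ dist (a j') (a i') := (hcons j' i').1
                    have t3 : dist (a j') (a i') ≤ dist (a j') z + dist z (a i') :=
                      dist_triangle _ _ _
                    linarith [dist_comm (a j') z, dist_comm (a i') z])
                linarith
            · have h0 := hsle i'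
              have h1 : dist z (a i') - r i' ≤ |dist z (a i') - r i'| := le_abs_self _
              have hd : dist (a i') z = dist z (a i') := dist_comm _ _
              linarith
          · intro j'
            simp only [Fin.snoc_castSucc]
            exact hcons i' j')
      ((1/2 : ℝ) ^ (k+1)) (by positivity)
    refine ⟨y, fun i => ?_, ?_⟩
    · have := hy i.castSucc
      simpa [Fin.snoc_castSucc] using this
    · have := hy (Fin.last n)
      simp only [Fin.snoc_last] at this
      have h1 : dist y z - s ≤ |dist y z - s| := le_abs_self _
      linarith
  obtain ⟨z0, hz0⟩ := hM n a r hr hcons 1 one_pos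
  let Z : (k : ℕ) → {z : M // ∀ i, |dist z (a i) - r i| ≤ (1/2 : ℝ) ^ k} := fun k =>
    Nat.rec ⟨z0, by simpa using hz0⟩
      (fun k p => ⟨(key k p.1 p.2).choose, (key k p.1 p.2).choose_spec.1⟩) k
  have hZd : ∀ k : ℕ, dist (Z (k+1)).1 (Z k).1 ≤ (1/2 : ℝ) ^ k + (1/2 : ℝ) ^ (k+1) := by
    intro k
    have e : ((Z (k+1)).1 : M) = (key k (Z k).1 (Z k).2).choose := rfl
    rw [e]
    exact (key k (Z k).1 (Z k).2).choose_spec.2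
  have hcauchy : CauchySeq fun k => (Z k).1 := by
    apply cauchySeq_of_le_geometric (1/2 : ℝ) (3/2) (by norm_num)
    intro k
    rw [dist_comm]
    calc dist (Z (k+1)).1 (Z k).1 ≤ (1/2 : ℝ) ^ k + (1/2 : ℝ) ^ (k+1) := hZd k
      _ = 3/2 * (1/2 : ℝ) ^ k := by ring
  obtain ⟨y, hy⟩ := cauchySeq_tendsto_of_complete hcauchy
  refine ⟨y, fun i => ?_⟩
  have h1 : Tendsto (fun k => dist (Z k).1 (a i)) atTop (nhds (dist y (a i))) :=
    hy.dist tendsto_const_nhds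
  have h2 : Tendsto (fun k => dist (Z k).1 (a i)) atTop (nhds (r i)) := by
    have h0 : Tendsto (fun k => dist (Z k).1 (a i) - r i) atTop (nhds 0) := by
      refine squeeze_zero_norm (a := fun k => (1/2 : ℝ) ^ k) (fun k => ?_) ?_
      · rw [Real.norm_eq_abs]; exact (Z k).2 i
      · exact tendsto_pow_atTop_nhds_zero_of_lt_one (by norm_num) (by norm_num)
    simpa using h0.add (tendsto_const_nhds (x := r i))
  exact tendsto_nhds_unique h1 h2

lemma iso_of_dense_match {U V : Type} [MetricSpace U] [MetricSpace V]
    [CompleteSpace U] [CompleteSpace V]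
    (X : ℕ → U) (Y : ℕ → V) (hXd : DenseRange X) (hYd : DenseRange Y)
    (hmatch : ∀ n m, dist (X n) (X m) = dist (Y n) (Y m)) : Nonempty (U ≃ᵢ V) := by
  have hgeom : Filter.Tendsto (fun k : ℕ => (1/2 : ℝ) ^ k) atTop (nhds 0) :=
    tendsto_pow_atTop_nhds_zero_of_lt_one (by norm_num) (by norm_num)
  have hsel : ∀ (p : U) (k : ℕ), ∃ n, dist p (X n) < (1/2 : ℝ) ^ k := by
    intro p k
    exact Metric.denseRange_iff.mp hXd p _ (by positivity)
  choose sel hsel using hsel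
  have hc : ∀ p : U, ∃ w : V, Tendsto (fun k => Y (sel p k)) atTop (nhds w) := by
    intro p
    apply cauchySeq_tendsto_of_complete
    apply cauchySeq_of_le_geometric (1/2 : ℝ) 3 (by norm_num)
    intro k
    have h1 := hsel p k
    have h2 := hsel p (k+1)
    calc dist (Y (sel p k)) (Y (sel p (k+1)))
        = dist (X (sel p k)) (X (sel p (k+1))) := (hmatch _ _).symm
      _ ≤ dist (X (sel p k)) p + dist p (X (sel p (k+1))) := dist_triangle _ _ _
      _ ≤ (1/2 : ℝ) ^ k + (1/2 : ℝ) ^ (k+1) := by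
          rw [dist_comm (X (sel p k)) p]; exact add_le_add h1.le h2.le
      _ ≤ 3 * (1/2 : ℝ) ^ k := by rw [pow_succ]; nlinarith [pow_pos (by norm_num : (0:ℝ) < 1/2) k]
  choose g hg using hc
  have hXlim : ∀ p : U, Tendsto (fun k => X (sel p k)) atTop (nhds p) := by
    intro p
    rw [tendsto_iff_dist_tendsto_zero]
    refine squeeze_zero (fun k => dist_nonneg) (fun k => ?_) hgeom
    rw [dist_comm]
    exact (hsel p k).le
  have hiso : ∀ p q : U, dist (g p) (g q) = dist p q := by
    intro p q
    have h1 : Tendsto (fun k => dist (Y (sel p k)) (Y (sel q k))) atTop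
        (nhds (dist (g p) (g q))) := (hg p).dist (hg q)
    have h2 : Tendsto (fun k => dist (Y (sel p k)) (Y (sel q k))) atTop (nhds (dist p q)) := by
      have h3 := (hXlim p).dist (hXlim q)
      have h4 : (fun k => dist (X (sel p k)) (X (sel q k)))
          = fun k => dist (Y (sel p k)) (Y (sel q k)) := funext fun k => hmatch _ _
      rwa [h4] at h3
    exact tendsto_nhds_unique h1 h2
  have hIso : Isometry g := Isometry.of_dist_eq hiso
  have hgX : ∀ n, g (X n) = Y n := by
    intro n
    refine tendsto_nhds_unique (hg (X n)) ?_
    rw [tendsto_iff_dist_tendsto_zero]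
    refine squeeze_zero (fun k => dist_nonneg) (fun k => ?_) hgeom
    calc dist (Y (sel (X n) k)) (Y n) = dist (X (sel (X n) k)) (X n) := (hmatch _ _).symm
      _ = dist (X n) (X (sel (X n) k)) := dist_comm _ _
      _ ≤ (1/2 : ℝ) ^ k := (hsel (X n) k).le
  have hsub : Set.range Y ⊆ Set.range g := by
    rintro _ ⟨n, rfl⟩
    exact ⟨X n, hgX n⟩
  have hdense : Dense (Set.range g) := hYd.mono hsub
  have hclosed : IsClosed (Set.range g) := hIso.isClosedEmbedding.isClosed_range
  have hsurj : Function.Surjective g := by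
    rw [← Set.range_eq_univ, ← hclosed.closure_eq, hdense.closure_eq]
  exact ⟨⟨Equiv.ofBijective g ⟨hIso.injective, hsurj⟩, hIso⟩⟩

variable {U V : Type} [MetricSpace U] [MetricSpace V]
 [MetricSpace U] [MetricSpace V]

open Classical in
noncomputable def bfseq [Nonempty U] [Nonempty V] (u : ℕ → U) (v : ℕ → V) : ℕ → U × V
  | n =>
    if Even n then
      (u (n / 2),
        if h : ∃ y : V, ∀ m, m < n → dist y (bfseq u v m).2 = dist (u (n / 2)) (bfseq u v m).1
        then h.choose else Classical.arbitrary V)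
    else
      ((if h : ∃ x : U, ∀ m, m < n → dist x (bfseq u v m).1 = dist (v (n / 2)) (bfseq u v m).2
        then h.choose else Classical.arbitrary U),
       v (n / 2))
  decreasing_by all_goals omega


lemma bfseq_even [Nonempty U] [Nonempty V] (u : ℕ → U) (v : ℕ → V) (k : ℕ) :
    (bfseq u v (2 * k)).1 = u k := by
  rw [bfseq]
  rw [if_pos ⟨k, by ring⟩]
  show u ((2 * k) / 2) = u k
  congr 1
  omega

lemma bfseq_odd [Nonempty U] [Nonempty V] (u : ℕ → U) (v : ℕ → V) (k : ℕ) :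
    (bfseq u v (2 * k + 1)).2 = v k := by
  rw [bfseq]
  rw [if_neg (by simp [Nat.even_add_one, parity_simps])]
  show v ((2 * k + 1) / 2) = v k
  congr 1
  omega

lemma bfseq_dist [Nonempty U] [Nonempty V] (u : ℕ → U) (v : ℕ → V)
    (hbU : ∀ x y : U, dist x y ≤ 1) (hbV : ∀ x y : V, dist x y ≤ 1)
    (hU : ExactExtProp U) (hV : ExactExtProp V) :
    ∀ n m, dist (bfseq u v n).1 (bfseq u v m).1 = dist (bfseq u v n).2 (bfseq u v m).2 := by
  have main : ∀ n m, m < n →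
      dist (bfseq u v n).1 (bfseq u v m).1 = dist (bfseq u v n).2 (bfseq u v m).2 := by
    intro n
    induction n using Nat.strong_induction_on with
    | _ n IH =>
      intro m hm
      have IH' : ∀ i j, i < n → j < n →
          dist (bfseq u v i).1 (bfseq u v j).1 = dist (bfseq u v i).2 (bfseq u v j).2 := by
        intro i j hi hj
        rcases lt_trichotomy i j with h | h | h
        · rw [dist_comm, dist_comm (bfseq u v i).2]
          exact IH j hj i h
        · subst h; simp
        · exact IH i hi j h
      by_cases hev : Even n
      · have hex : ∃ y : V, ∀ m, m < n →
            dist y (bfseq u v m).2 = dist (u (n / 2)) (bfseq u v m).1 := by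
          obtain ⟨y, hy⟩ := hV n (fun k : Fin n => (bfseq u v k).2)
            (fun k : Fin n => dist (u (n / 2)) (bfseq u v k).1)
            (fun k => ⟨dist_nonneg, hbU _ _⟩)
            (fun i j => by
              try dsimp only
              have hd : dist (bfseq u v (i : ℕ)).2 (bfseq u v (j : ℕ)).2
                  = dist (bfseq u v (i : ℕ)).1 (bfseq u v (j : ℕ)).1 := (IH' i j i.2 j.2).symm
              constructor
              · rw [hd, dist_comm (u (n/2)) (bfseq u v (i:ℕ)).1, dist_comm (u (n/2)) (bfseq u v (j:ℕ)).1]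
                exact abs_dist_sub_le _ _ _
              · rw [hd, dist_comm (u (n/2)) (bfseq u v (i:ℕ)).1]
                exact dist_triangle _ _ _)
          exact ⟨y, fun m hm => hy ⟨m, hm⟩⟩
        have hn : bfseq u v n = (u (n / 2), hex.choose) := by
          rw [bfseq, if_pos hev, dif_pos hex]
        rw [hn]
        exact (hex.choose_spec m hm).symm
      · have hex : ∃ x : U, ∀ m, m < n →
            dist x (bfseq u v m).1 = dist (v (n / 2)) (bfseq u v m).2 := by
          obtain ⟨x, hx⟩ := hU n (fun k : Fin n => (bfseq u v k).1)
            (fun k : Fin n => dist (v (n / 2)) (bfseq u v k).2)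
            (fun k => ⟨dist_nonneg, hbV _ _⟩)
            (fun i j => by
              try dsimp only
              have hd : dist (bfseq u v (i : ℕ)).1 (bfseq u v (j : ℕ)).1
                  = dist (bfseq u v (i : ℕ)).2 (bfseq u v (j : ℕ)).2 := IH' i j i.2 j.2
              constructor
              · rw [hd, dist_comm (v (n/2)) (bfseq u v (i:ℕ)).2, dist_comm (v (n/2)) (bfseq u v (j:ℕ)).2]
                exact abs_dist_sub_le _ _ _
              · rw [hd, dist_comm (v (n/2)) (bfseq u v (i:ℕ)).2]
                exact dist_triangle _ _ _)
          exact ⟨x, fun m hm => hx ⟨m, hm⟩⟩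
        have hn : bfseq u v n = (hex.choose, v (n / 2)) := by
          rw [bfseq, if_neg hev, dif_pos hex]
        rw [hn]
        exact hex.choose_spec m hm
  intro n m
  rcases lt_trichotomy n m with h | h | h
  · rw [dist_comm, dist_comm (bfseq u v n).2]
    exact main m n h
  · subst h; simp
  · exact main n m h

lemma approx_nonempty {M : Type} [MetricSpace M] (h : ApproxExtProp M) : Nonempty M := by
  obtain ⟨y, -⟩ := h 0 Fin.elim0 Fin.elim0 (fun i => i.elim0) (fun i => i.elim0) 1 one_pos
  exact ⟨y⟩

/-- Any two complete separable metric spaces of diameter `≤ 1`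
satisfying the approximate one-point extension property are isometric. -/
theorem unique_approx_ext_space (U V : Type) [MetricSpace U] [MetricSpace V]
    [CompleteSpace U] [CompleteSpace V] [SeparableSpace U] [SeparableSpace V]
    (hbU : ∀ x y : U, dist x y ≤ 1) (hbV : ∀ x y : V, dist x y ≤ 1)
    (hU : ApproxExtProp U) (hV : ApproxExtProp V) :
    Nonempty (U ≃ᵢ V) := by
  haveI : Nonempty U := approx_nonempty hU
  haveI : Nonempty V := approx_nonempty hV
  have hU' : ExactExtProp U := exact_of_approx hU
  have hV' : ExactExtProp V := exact_of_approx hV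
  obtain ⟨u, hu⟩ := exists_dense_seq U
  obtain ⟨v, hv⟩ := exists_dense_seq V
  have hmatch := bfseq_dist u v hbU hbV hU' hV'
  have hXd : DenseRange fun n => (bfseq u v n).1 := by
    refine hu.mono ?_
    rintro _ ⟨k, rfl⟩
    exact ⟨2 * k, bfseq_even u v k⟩
  have hYd : DenseRange fun n => (bfseq u v n).2 := by
    refine hv.mono ?_
    rintro _ ⟨k, rfl⟩
    exact ⟨2 * k + 1, bfseq_odd u v k⟩
  exact iso_of_dense_match _ _ hXd hYd hmatch
end
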